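/- Let n ≥ k ≥ 2 be positive integers with k ≡ 2 or 3 (mod 4) and with C(n,k) odd. Then the map σ defined by σ(M) := I(n,k) − M (entrywise subtraction) is a well-defined map from E° to E°, it is an involution (σ(σ(M)) = M for all M ∈ E°), and it is sign-reversing: sign(σ(M)) = −sign(M) for all M ∈ E°. Consequently, Σ_{M ∈ E°} (−1)^{|M|} = 0. -/

import Mathlib

open Finset

/-- Row index type: `2`-element subsets of `[n]`. -/
abbrev RowIdx (n : ℕ) := {e : Finset (Fin n) // e ∈ Finset.powersetCard 2 (Finset.univ : Finset (Fin n))}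

/-- Column index type: `k`-element subsets of `[n]`. -/
abbrev ColIdx (n k : ℕ) := {S : Finset (Fin n) // S ∈ Finset.powersetCard k (Finset.univ : Finset (Fin n))}

/-- Decidability of `M e S = true` for a `Bool`-valued matrix (found automatically by the older Lean). -/
instance matrixBoolEntryDecidable {n k : ℕ} (M : Matrix (RowIdx n) (ColIdx n k) Bool)
    (e : RowIdx n) (S : ColIdx n k) : Decidable (M e S = true) :=
  instDecidableEqBool (M e S) true

/-- The incidence matrix `I(n,k)`, with `(e,S)`-entry `true` iff `e ⊆ S`.
`{0,1}`-matrices are encoded as `Bool`-valued matrices. -/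
def Ink (n k : ℕ) : Matrix (RowIdx n) (ColIdx n k) Bool :=
  Matrix.of fun e S => decide (e.1 ⊆ S.1)

/-- `|M|`: the total number of ones (entries equal to `true`) of `M`. -/
def wt {n k : ℕ} (M : Matrix (RowIdx n) (ColIdx n k) Bool) : ℕ :=
  (Finset.univ.filter fun p : RowIdx n × ColIdx n k => M p.1 p.2 = true).card

/-- `Edges(M)`: the set of rows of `M` containing at least one `1`. -/
def mEdges {n k : ℕ} (M : Matrix (RowIdx n) (ColIdx n k) Bool) : Finset (RowIdx n) :=
  Finset.univ.filter fun e => ∃ S, M e S = true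

/-- The set `A'` of `{0,1}`-matrices `M ⪯ I(n,k)` each of whose columns has at least `1`
and at most `C(k,2) - 1` ones. -/
def matA (n k : ℕ) : Finset (Matrix (RowIdx n) (ColIdx n k) Bool) :=
  Finset.univ.filter fun M =>
    (∀ e S, M e S = true → Ink n k e S = true) ∧
    ∀ S : ColIdx n k,
      1 ≤ (Finset.univ.filter fun e => M e S = true).card ∧
      (Finset.univ.filter fun e => M e S = true).card ≤ k.choose 2 - 1

/-- `E_m`: the set of `M ∈ A'` with `|Edges(M)| = m`. -/
def matE (n k m : ℕ) : Finset (Matrix (RowIdx n) (ColIdx n k) Bool) :=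
  (matA n k).filter fun M => (mEdges M).card = m

/-- `E°`: the set of `M ∈ E_{C(n,2)}` each of whose rows has at least `1` and at most
`C(n-2,k-2) - 1` ones. -/
def matEcirc (n k : ℕ) : Finset (Matrix (RowIdx n) (ColIdx n k) Bool) :=
  (matE n k (n.choose 2)).filter fun M =>
    ∀ e : RowIdx n,
      1 ≤ (Finset.univ.filter fun S => M e S = true).card ∧
      (Finset.univ.filter fun S => M e S = true).card ≤ (n - 2).choose (k - 2) - 1

/-- The map `σ(M) = I(n,k) − M` (entrywise subtraction of `{0,1}`-matrices with `M ⪯ I(n,k)`,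
realized on `Bool` entries as `I(n,k) ∧ ¬M`). -/
def sigmaMap (n k : ℕ) (M : Matrix (RowIdx n) (ColIdx n k) Bool) :
    Matrix (RowIdx n) (ColIdx n k) Bool :=
  Matrix.of fun e S => Ink n k e S && !(M e S)

lemma card_attach_filter {α : Type*} (t : Finset α) (p : α → Prop) [DecidablePred p] :
    (t.attach.filter fun e => p e.1).card = (t.filter p).card := by
  apply Finset.card_bij (fun e _ => e.1)
  · intro a ha
    simp only [Finset.mem_filter, Finset.mem_attach, true_and] at ha
    simp [Finset.mem_filter, a.2, ha]
  · intro a ha b hb h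
    exact Subtype.ext h
  · intro b hb
    simp only [Finset.mem_filter] at hb
    exact ⟨⟨b, hb.1⟩, by simp [hb.2], rfl⟩

lemma col_Ink {n k : ℕ} (S : ColIdx n k) :
    (Finset.univ.filter fun e : RowIdx n => Ink n k e S = true).card = k.choose 2 := by
  have hS := (Finset.mem_powersetCard.mp S.2).2
  simp only [Ink, Matrix.of_apply, decide_eq_true_eq]
  rw [Finset.univ_eq_attach, card_attach_filter _ (fun A => A ⊆ S.1)]
  have h : (Finset.powersetCard 2 (Finset.univ : Finset (Fin n))).filter (fun A => A ⊆ S.1)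
      = Finset.powersetCard 2 S.1 := by
    ext A
    simp only [Finset.mem_filter, Finset.mem_powersetCard, Finset.subset_univ, true_and]
    tauto
  rw [h, Finset.card_powersetCard, hS]

lemma row_Ink {n k : ℕ} (hk : 2 ≤ k) (e : RowIdx n) :
    (Finset.univ.filter fun S : ColIdx n k => Ink n k e S = true).card = (n-2).choose (k-2) := by
  have he := (Finset.mem_powersetCard.mp e.2).2
  simp only [Ink, Matrix.of_apply, decide_eq_true_eq]
  rw [Finset.univ_eq_attach, card_attach_filter _ (fun A => e.1 ⊆ A)]
  have hcard : ((Finset.univ : Finset (Fin n)) \ e.1).card = n - 2 := by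
    rw [Finset.card_sdiff_of_subset (Finset.subset_univ _), Finset.card_univ, Fintype.card_fin, he]
  have h : ((Finset.powersetCard k (Finset.univ : Finset (Fin n))).filter fun A => e.1 ⊆ A).card
      = (Finset.powersetCard (k-2) ((Finset.univ : Finset (Fin n)) \ e.1)).card := by
    apply Finset.card_bij' (fun A _ => A \ e.1) (fun B _ => B ∪ e.1)
    · intro A hA
      simp only [Finset.mem_filter, Finset.mem_powersetCard, Finset.subset_univ, true_and] at hA ⊢
      obtain ⟨hAc, heA⟩ := hA
      refine ⟨Finset.sdiff_subset_sdiff (Finset.subset_univ _) le_rfl, ?_⟩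
      rw [Finset.card_sdiff_of_subset heA, hAc, he]
    · intro B hB
      simp only [Finset.mem_powersetCard, Finset.mem_filter, Finset.subset_univ, true_and] at hB ⊢
      obtain ⟨hBu, hBc⟩ := hB
      have hdisj : Disjoint B e.1 := by
        rw [Finset.disjoint_left]
        intro a haB
        exact (Finset.mem_sdiff.mp (hBu haB)).2
      refine ⟨?_, Finset.subset_union_right⟩
      rw [Finset.card_union_of_disjoint hdisj, hBc, he]
      omega
    · intro A hA
      simp only [Finset.mem_filter] at hA
      exact Finset.sdiff_union_of_subset hA.2
    · intro B hB
      simp only [Finset.mem_powersetCard] at hB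
      ext a
      have := @hB.1 a
      simp only [Finset.mem_sdiff, Finset.mem_union] at this ⊢
      tauto
  rw [h, Finset.card_powersetCard, hcard]

lemma filter_card_split {α : Type*} [Fintype α] (f g h : α → Bool)
    (H : ∀ a, f a = (h a && !(g a))) (hle : ∀ a, g a = true → h a = true) :
    (Finset.univ.filter fun a => g a = true).card + (Finset.univ.filter fun a => f a = true).card
      = (Finset.univ.filter fun a => h a = true).card := by
  simp only [Finset.card_filter, ← Finset.sum_add_distrib]
  apply Finset.sum_congr rfl
  intro a _
  have h1 := hle a
  have h2 := H a
  cases hg : g a <;> cases hh : h a <;> simp [hg, hh] at h1 h2 ⊢ <;> simp [h2]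

lemma wt_eq_sum {n k : ℕ} (M : Matrix (RowIdx n) (ColIdx n k) Bool) :
    wt M = ∑ e : RowIdx n, (Finset.univ.filter fun S => M e S = true).card := by
  simp only [wt, Finset.card_filter, Fintype.sum_prod_type]

lemma card_rowIdx (n : ℕ) : (Finset.univ : Finset (RowIdx n)).card = n.choose 2 := by
  rw [Finset.univ_eq_attach, Finset.card_attach, Finset.card_powersetCard, Finset.card_univ,
    Fintype.card_fin]

lemma wt_Ink {n k : ℕ} (hk : 2 ≤ k) : wt (Ink n k) = n.choose 2 * (n-2).choose (k-2) := by
  rw [wt_eq_sum]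
  rw [Finset.sum_congr rfl (fun e _ => row_Ink hk e)]
  rw [Finset.sum_const, smul_eq_mul, card_rowIdx]

lemma odd_choose_two {k : ℕ} (hk : 2 ≤ k) (hkmod : k % 4 = 2 ∨ k % 4 = 3) :
    Odd (k.choose 2) := by
  have hdvd : 2 ∣ k * (k - 1) := (Nat.even_mul_pred_self k).two_dvd
  have hc : k.choose 2 * 2 = k * (k - 1) := by
    rw [Nat.choose_two_right, Nat.div_mul_cancel hdvd]
  have hmod : (k * (k - 1)) % 4 = 2 := by
    rw [Nat.mul_mod]
    rcases hkmod with h | h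
    · rw [h, show (k-1) % 4 = 1 by omega]
    · rw [h, show (k-1) % 4 = 2 by omega]
  rw [Nat.odd_iff]
  generalize hT : k * (k - 1) = T at hc hmod
  omega

lemma odd_wt_Ink {n k : ℕ} (hk : 2 ≤ k) (hkn : k ≤ n)
    (hkmod : k % 4 = 2 ∨ k % 4 = 3) (hodd : Odd (n.choose k)) : Odd (wt (Ink n k)) := by
  rw [wt_Ink hk, ← Nat.choose_mul hk]
  exact hodd.mul (odd_choose_two hk hkmod)

lemma mem_matEcirc_iff {n k : ℕ} {M : Matrix (RowIdx n) (ColIdx n k) Bool} :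
    M ∈ matEcirc n k ↔
    (∀ e S, M e S = true → Ink n k e S = true) ∧
    (∀ S : ColIdx n k,
      1 ≤ (Finset.univ.filter fun e => M e S = true).card ∧
      (Finset.univ.filter fun e => M e S = true).card ≤ k.choose 2 - 1) ∧
    (mEdges M).card = n.choose 2 ∧
    (∀ e : RowIdx n,
      1 ≤ (Finset.univ.filter fun S => M e S = true).card ∧
      (Finset.univ.filter fun S => M e S = true).card ≤ (n - 2).choose (k - 2) - 1) := by
  simp only [matEcirc, matE, matA, Finset.mem_filter, Finset.mem_univ, true_and]
  tauto

lemma col_split {n k : ℕ} (M : Matrix (RowIdx n) (ColIdx n k) Bool)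
    (hle : ∀ e S, M e S = true → Ink n k e S = true) (S : ColIdx n k) :
    (Finset.univ.filter fun e => M e S = true).card
      + (Finset.univ.filter fun e => sigmaMap n k M e S = true).card = k.choose 2 := by
  rw [← col_Ink S]
  exact filter_card_split (fun e => sigmaMap n k M e S) (fun e => M e S)
    (fun e => Ink n k e S) (fun e => rfl) (fun e => hle e S)

lemma row_split {n k : ℕ} (hk : 2 ≤ k) (M : Matrix (RowIdx n) (ColIdx n k) Bool)
    (hle : ∀ e S, M e S = true → Ink n k e S = true) (e : RowIdx n) :
    (Finset.univ.filter fun S => M e S = true).card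
      + (Finset.univ.filter fun S => sigmaMap n k M e S = true).card = (n-2).choose (k-2) := by
  rw [← row_Ink hk e]
  exact filter_card_split (fun S => sigmaMap n k M e S) (fun S => M e S)
    (fun S => Ink n k e S) (fun S => rfl) (fun S => hle e S)

lemma wt_split {n k : ℕ} (M : Matrix (RowIdx n) (ColIdx n k) Bool)
    (hle : ∀ e S, M e S = true → Ink n k e S = true) :
    wt M + wt (sigmaMap n k M) = wt (Ink n k) := by
  exact filter_card_split (fun p : RowIdx n × ColIdx n k => sigmaMap n k M p.1 p.2)
    (fun p => M p.1 p.2) (fun p => Ink n k p.1 p.2) (fun p => rfl) (fun p => hle p.1 p.2)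

theorem stmt_13 (n k : ℕ) (hk : 2 ≤ k) (hkn : k ≤ n)
    (hkmod : k % 4 = 2 ∨ k % 4 = 3) (hodd : Odd (n.choose k)) :
    (∀ M ∈ matEcirc n k, sigmaMap n k M ∈ matEcirc n k) ∧
    (∀ M ∈ matEcirc n k, sigmaMap n k (sigmaMap n k M) = M) ∧
    (∀ M ∈ matEcirc n k, (-1 : ℤ) ^ wt (sigmaMap n k M) = -((-1 : ℤ) ^ wt M)) ∧
    (∑ M ∈ matEcirc n k, (-1 : ℤ) ^ wt M) = 0 := by
  have hwtI := odd_wt_Ink hk hkn hkmod hodd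
  -- well-definedness
  have hmem : ∀ M ∈ matEcirc n k, sigmaMap n k M ∈ matEcirc n k := by
    intro M hM
    rw [mem_matEcirc_iff] at hM ⊢
    obtain ⟨hle, hcol, hedge, hrow⟩ := hM
    have hrowσ : ∀ e : RowIdx n,
        1 ≤ (Finset.univ.filter fun S => sigmaMap n k M e S = true).card ∧
        (Finset.univ.filter fun S => sigmaMap n k M e S = true).card
          ≤ (n - 2).choose (k - 2) - 1 := by
      intro e
      have h1 := row_split hk M hle e
      have h2 := hrow e
      omega
    refine ⟨?_, ?_, ?_, hrowσ⟩
    · intro e S h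
      simp only [sigmaMap, Matrix.of_apply, Bool.and_eq_true] at h
      exact h.1
    · intro S
      have h1 := col_split M hle S
      have h2 := hcol S
      omega
    · have : mEdges (sigmaMap n k M) = Finset.univ := by
        rw [Finset.eq_univ_iff_forall]
        intro e
        have h1 := (hrowσ e).1
        rw [mEdges, Finset.mem_filter]
        refine ⟨Finset.mem_univ _, ?_⟩
        obtain ⟨S, hS⟩ := Finset.card_pos.mp h1
        exact ⟨S, (Finset.mem_filter.mp hS).2⟩
      rw [this, card_rowIdx]
  -- involution
  have hinv : ∀ M ∈ matEcirc n k, sigmaMap n k (sigmaMap n k M) = M := by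
    intro M hM
    have hle := (mem_matEcirc_iff.mp hM).1
    funext e S
    simp only [sigmaMap, Matrix.of_apply]
    cases hMeS : M e S
    · cases hI : Ink n k e S <;> simp [hI]
    · have := hle e S hMeS
      simp [this]
  -- sign
  have hsign : ∀ M ∈ matEcirc n k, (-1 : ℤ) ^ wt (sigmaMap n k M) = -((-1 : ℤ) ^ wt M) := by
    intro M hM
    have hle := (mem_matEcirc_iff.mp hM).1
    have h := wt_split M hle
    rw [Nat.odd_iff] at hwtI
    rcases Nat.even_or_odd (wt M) with he | ho
    · have hσ : Odd (wt (sigmaMap n k M)) := by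
        rw [Nat.even_iff] at he; rw [Nat.odd_iff]; omega
      rw [hσ.neg_one_pow, he.neg_one_pow]
    · have hσ : Even (wt (sigmaMap n k M)) := by
        rw [Nat.odd_iff] at ho; rw [Nat.even_iff]; omega
      rw [hσ.neg_one_pow, ho.neg_one_pow]
      norm_num
  refine ⟨hmem, hinv, hsign, ?_⟩
  apply Finset.sum_involution (fun M _ => sigmaMap n k M)
  · intro M hM
    rw [hsign M hM]
    ring
  · intro M hM _ heq
    have h := hsign M hM
    rw [heq] at h
    have hne : ((-1 : ℤ) ^ wt M) ≠ 0 := by positivity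
    have : (2 : ℤ) * ((-1 : ℤ) ^ wt M) = 0 := by linarith
    simp at this
  · intro M hM
    exact hmem M hM
  · intro M hM
    exact hinv M hM
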